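/- Let t^a ∈ S be a monomial, let i ≠ j be indices in {1,…,r}, and let u ∈ P_i. Let Δ denote the total weight in H_{t^a} of the edges joining two vertices of V_G ∖ P_j (i.e., Δ = Σ a_e over edges e = {w,w'} of G with w, w' ∉ P_j), and for a monomial t^c let δ(c) denote the total weight in H_{t^c} of the edges joining u to a vertex of V_G ∖ P_j (i.e., δ(c) = Σ c_e over edges e = {u,w} of G with w ∉ P_j). Suppose there exists an edge {w_1,w_2} of H_{t^a} (i.e., a_{{w_1,w_2}} ≥ 1) with w_1, w_2 ∉ P_j and w_1 ≠ u, w_2 ≠ u. Then there exists a monomial t^b ∈ S such that t^a − t^b ∈ I(X), wt_{t^b}(v) = wt_{t^a}(v) for every vertex v of G, and δ(b) = min{wt_{t^a}(u), Δ}. -/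

import Mathlib

open MvPolynomial

/-- The value `x^e = x_i * x_j` of an unordered pair `e = {i,j}` of vertices. -/
noncomputable def edgeVal {V K : Type*} [CommMonoid K] (x : V → K) (e : Sym2 V) : K :=
  Sym2.lift ⟨fun i j => x i * x j, fun i j => mul_comm _ _⟩ e

/-- The vanishing ideal `I(X)` of the algebraic toric set `X` parameterized by the
edges of the graph `G`: the ideal generated by all homogeneous polynomials vanishing
on all points `(x^{e_1}, …, x^{e_s})` with `x ∈ (K*)^n`. -/
noncomputable def vanishingIdeal (K : Type*) [Field K] {V : Type*} (G : SimpleGraph V) :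
    Ideal (MvPolynomial G.edgeSet K) :=
  Ideal.span {f | (∃ d, f.IsHomogeneous d) ∧
    ∀ x : V → Kˣ,
      MvPolynomial.eval (fun e : G.edgeSet => edgeVal (fun v => (x v : K)) (e : Sym2 V)) f = 0}

/-- The weighted degree of a vertex `v` in the weighted subgraph `H_{t^a}` of `G`
associated to the monomial `t^a`. -/
noncomputable def wt {V : Type*} [DecidableEq V] (G : SimpleGraph V) [Fintype G.edgeSet]
    (a : G.edgeSet →₀ ℕ) (v : V) : ℕ :=
  ∑ e : G.edgeSet, if v ∈ (e : Sym2 V) then a e else 0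
open scoped Classical

/-- The total weight, in the weighted subgraph `H_{t^a}`, of the edges both of whose
endpoints avoid the part `p⁻¹(j)`. -/
noncomputable def totalWtAvoiding {V ι : Type*} (G : SimpleGraph V) [Fintype G.edgeSet]
    (p : V → ι) (j : ι) (a : G.edgeSet →₀ ℕ) : ℕ :=
  ∑ e : G.edgeSet, if ∀ v ∈ (e : Sym2 V), p v ≠ j then a e else 0

/-- The total weight, in the weighted subgraph `H_{t^a}`, of the edges incident to `u`
whose endpoints all avoid the part `p⁻¹(j)`. -/
noncomputable def wtAtAvoiding {V ι : Type*} (G : SimpleGraph V) [Fintype G.edgeSet]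
    (p : V → ι) (j : ι) (u : V) (a : G.edgeSet →₀ ℕ) : ℕ :=
  ∑ e : G.edgeSet, if u ∈ (e : Sym2 V) ∧ ∀ v ∈ (e : Sym2 V), p v ≠ j then a e else 0

section aux
variable {V : Type*} [DecidableEq V] (G : SimpleGraph V) [Fintype G.edgeSet]

/-- additivity of the conditional sums -/
lemma sumIf_add (P : G.edgeSet → Prop) [DecidablePred P] (a b : G.edgeSet →₀ ℕ) :
    ∑ e : G.edgeSet, (if P e then (a + b) e else 0)
      = (∑ e : G.edgeSet, if P e then a e else 0) + ∑ e : G.edgeSet, if P e then b e else 0 := by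
  rw [← Finset.sum_add_distrib]
  refine Finset.sum_congr rfl fun e _ => ?_
  by_cases h : P e <;> simp [h]

lemma sumIf_single (P : G.edgeSet → Prop) [DecidablePred P] (f : G.edgeSet) :
    ∑ e : G.edgeSet, (if P e then (Finsupp.single f 1) e else 0)
      = if P f then 1 else 0 := by
  have : ∀ e : G.edgeSet, (if P e then (Finsupp.single f 1) e else 0)
      = if e = f then (if P f then 1 else 0) else 0 := by
    intro e
    rcases eq_or_ne e f with rfl | hef
    · simp
    · simp [Finsupp.single_apply, Ne.symm hef, hef]
  rw [Finset.sum_congr rfl fun e _ => this e, Finset.sum_ite_eq' Finset.univ f]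
  simp

lemma sumIf_mono (P Q : G.edgeSet → Prop) [DecidablePred P] [DecidablePred Q] (hPQ : ∀ e, P e → Q e) (a : G.edgeSet →₀ ℕ) :
    (∑ e : G.edgeSet, if P e then a e else 0) ≤ ∑ e : G.edgeSet, if Q e then a e else 0 := by
  refine Finset.sum_le_sum fun e _ => ?_
  by_cases h : P e
  · simp [h, hPQ e h]
  · simp [h]

lemma sumIf_exists (P Q : G.edgeSet → Prop) [DecidablePred P] [DecidablePred Q] (a : G.edgeSet →₀ ℕ)
    (h : (∑ e : G.edgeSet, if P e then a e else 0) < ∑ e : G.edgeSet, if Q e then a e else 0) :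
    ∃ e, Q e ∧ ¬ P e ∧ 1 ≤ a e := by
  by_contra hc
  push_neg at hc
  refine absurd (Finset.sum_le_sum fun e _ => ?_) (not_le.mpr h)
  by_cases hQ : Q e
  · by_cases hP : P e
    · simp [hP, hQ]
    · have := hc e hQ hP; simp [hQ, hP]; omega
  · simp [hQ]

lemma sum_indicator_pair {y z : V} (hyz : y ≠ z) [Fintype V] (m : ℕ) :
    ∑ v : V, (if v ∈ s(y, z) then m else 0) = 2 * m := by
  have : ∀ v : V, (if v ∈ s(y, z) then m else 0)
      = (if v = y then m else 0) + (if v = z then m else 0) := by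
    intro v
    rcases eq_or_ne v y with rfl | hvy
    · simp [hyz]
    · rcases eq_or_ne v z with rfl | hvz
      · simp [hvy]
      · simp [hvy, hvz, Sym2.mem_iff]
  rw [Finset.sum_congr rfl fun v _ => this v, Finset.sum_add_distrib,
    Finset.sum_ite_eq' Finset.univ y, Finset.sum_ite_eq' Finset.univ z]
  simp; omega

lemma edge_two (e : G.edgeSet) : ∃ y z : V, (e : Sym2 V) = s(y, z) ∧ y ≠ z := by
  obtain ⟨e, he⟩ := e
  induction e using Sym2.ind with
  | _ y z => exact ⟨y, z, rfl, G.ne_of_adj he⟩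

lemma sum_wt [Fintype V] (a : G.edgeSet →₀ ℕ) :
    ∑ v : V, wt G a v = 2 * ∑ e : G.edgeSet, a e := by
  unfold wt
  rw [Finset.sum_comm, Finset.mul_sum]
  refine Finset.sum_congr rfl fun e _ => ?_
  obtain ⟨y, z, hez, hyz⟩ := edge_two G e
  rw [hez]
  exact sum_indicator_pair hyz _

lemma degree_eq_sum (a : G.edgeSet →₀ ℕ) :
    a.degree = ∑ e : G.edgeSet, a e :=
  Finset.sum_subset (Finset.subset_univ _)
    (fun e _ he => Finsupp.notMem_support_iff.mp he)

lemma eval_monomial_wt {K : Type*} [CommRing K] [Fintype V] (x : V → Kˣ) (a : G.edgeSet →₀ ℕ) :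
    eval (fun e : G.edgeSet => edgeVal (fun v => (x v : K)) (e : Sym2 V)) (monomial a (1 : K))
      = ∏ v : V, (x v : K) ^ wt G a v := by
  rw [eval_monomial, one_mul, Finsupp.prod_fintype _ _ fun _ => pow_zero _]
  unfold wt
  simp_rw [← Finset.prod_pow_eq_pow_sum]
  rw [Finset.prod_comm]
  refine Finset.prod_congr rfl fun e _ => ?_
  obtain ⟨y, z, hez, hyz⟩ := edge_two G e
  rw [hez]
  have : ∀ v : V, ((x v : K) ^ if v ∈ s(y, z) then a e else 0)
      = (if v = y then (x y : K) ^ a e else 1)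
        * (if v = z then (x z : K) ^ a e else 1) := by
    intro v
    rcases eq_or_ne v y with rfl | hvy
    · simp [hyz]
    · rcases eq_or_ne v z with rfl | hvz
      · simp [hvy]
      · simp [hvy, hvz, Sym2.mem_iff]
  rw [Finset.prod_congr rfl fun v _ => this v, Finset.prod_mul_distrib,
    Finset.prod_ite_eq' Finset.univ y, Finset.prod_ite_eq' Finset.univ z]
  simp [edgeVal, mul_pow]

end aux

section main
variable {V ι : Type*} [DecidableEq V] (G : SimpleGraph V) [Fintype G.edgeSet]

lemma mem_vanishing {K : Type*} [Field K] [Fintype V] (a b : G.edgeSet →₀ ℕ)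
    (h : ∀ v, wt G b v = wt G a v) :
    ((monomial a 1 : MvPolynomial G.edgeSet K) - monomial b 1) ∈ vanishingIdeal K G := by
  apply Ideal.subset_span
  have hsum : ∑ e : G.edgeSet, b e = ∑ e : G.edgeSet, a e := by
    have ha := sum_wt G a
    have hb := sum_wt G b
    have hv : ∑ v : V, wt G b v = ∑ v : V, wt G a v :=
      Finset.sum_congr rfl fun v _ => h v
    omega
  constructor
  · exact ⟨a.degree, (isHomogeneous_monomial 1 rfl).sub
      (isHomogeneous_monomial 1 (by rw [degree_eq_sum, degree_eq_sum, hsum]))⟩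
  · intro x
    rw [map_sub, eval_monomial_wt, eval_monomial_wt]
    have : ∀ v : V, ((x v : K)) ^ wt G b v = ((x v : K)) ^ wt G a v := fun v => by rw [h v]
    rw [Finset.prod_congr rfl fun v _ => this v, sub_self]

variable (p : V → ι) (j : ι) (u : V)

lemma wt_fadd (x y : G.edgeSet →₀ ℕ) (v : V) : wt G (x + y) v = wt G x v + wt G y v := by
  unfold wt
  rw [← Finset.sum_add_distrib]
  refine Finset.sum_congr rfl fun e _ => ?_
  by_cases h : v ∈ (e : Sym2 V)
  · simp only [if_pos h, Finsupp.add_apply]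
  · simp only [if_neg h]

lemma total_fadd (x y : G.edgeSet →₀ ℕ) :
    totalWtAvoiding G p j (x + y) = totalWtAvoiding G p j x + totalWtAvoiding G p j y := by
  unfold totalWtAvoiding
  rw [← Finset.sum_add_distrib]
  refine Finset.sum_congr rfl fun e _ => ?_
  by_cases h : ∀ v ∈ (e : Sym2 V), p v ≠ j
  · simp only [if_pos h, Finsupp.add_apply]
  · simp only [if_neg h]

lemma at_fadd (x y : G.edgeSet →₀ ℕ) :
    wtAtAvoiding G p j u (x + y) = wtAtAvoiding G p j u x + wtAtAvoiding G p j u y := by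
  unfold wtAtAvoiding
  rw [← Finset.sum_add_distrib]
  refine Finset.sum_congr rfl fun e _ => ?_
  by_cases h : u ∈ (e : Sym2 V) ∧ ∀ v ∈ (e : Sym2 V), p v ≠ j
  · simp only [if_pos h, Finsupp.add_apply]
  · simp only [if_neg h]

lemma wt_fsingle (f : G.edgeSet) (v : V) :
    wt G (Finsupp.single f 1) v = if v ∈ (f : Sym2 V) then 1 else 0 := by
  unfold wt
  rw [Finset.sum_eq_single f]
  · by_cases h : v ∈ (f : Sym2 V)
    · rw [if_pos h, if_pos h, Finsupp.single_eq_same]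
    · rw [if_neg h, if_neg h]
  · intro b _ hb
    rw [Finsupp.single_eq_of_ne' (Ne.symm hb), ite_self]
  · simp

lemma total_fsingle (f : G.edgeSet) :
    totalWtAvoiding G p j (Finsupp.single f 1)
      = if ∀ v ∈ (f : Sym2 V), p v ≠ j then 1 else 0 := by
  unfold totalWtAvoiding
  rw [Finset.sum_eq_single f]
  · by_cases h : ∀ v ∈ (f : Sym2 V), p v ≠ j
    · rw [if_pos h, if_pos h, Finsupp.single_eq_same]
    · rw [if_neg h, if_neg h]
  · intro b _ hb
    rw [Finsupp.single_eq_of_ne' (Ne.symm hb), ite_self]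
  · simp

lemma at_fsingle (f : G.edgeSet) :
    wtAtAvoiding G p j u (Finsupp.single f 1)
      = if u ∈ (f : Sym2 V) ∧ ∀ v ∈ (f : Sym2 V), p v ≠ j then 1 else 0 := by
  unfold wtAtAvoiding
  rw [Finset.sum_eq_single f]
  · by_cases h : u ∈ (f : Sym2 V) ∧ ∀ v ∈ (f : Sym2 V), p v ≠ j
    · rw [if_pos h, if_pos h, Finsupp.single_eq_same]
    · rw [if_neg h, if_neg h]
  · intro b _ hb
    rw [Finsupp.single_eq_of_ne' (Ne.symm hb), ite_self]
  · simp

lemma at_le_wt (a : G.edgeSet →₀ ℕ) : wtAtAvoiding G p j u a ≤ wt G a u := by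
  unfold wtAtAvoiding wt
  refine Finset.sum_le_sum fun e _ => ?_
  by_cases h : u ∈ (e : Sym2 V) ∧ ∀ v ∈ (e : Sym2 V), p v ≠ j
  · rw [if_pos h, if_pos h.1]
  · rw [if_neg h]
    exact Nat.zero_le _

lemma at_le_total (a : G.edgeSet →₀ ℕ) : wtAtAvoiding G p j u a ≤ totalWtAvoiding G p j a := by
  unfold wtAtAvoiding totalWtAvoiding
  refine Finset.sum_le_sum fun e _ => ?_
  by_cases h : u ∈ (e : Sym2 V) ∧ ∀ v ∈ (e : Sym2 V), p v ≠ j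
  · rw [if_pos h, if_pos h.2]
  · rw [if_neg h]
    exact Nat.zero_le _

lemma exists_wt_witness (a : G.edgeSet →₀ ℕ) (h : wtAtAvoiding G p j u a < wt G a u) :
    ∃ e : G.edgeSet, u ∈ (e : Sym2 V)
      ∧ ¬(u ∈ (e : Sym2 V) ∧ ∀ v ∈ (e : Sym2 V), p v ≠ j) ∧ 1 ≤ a e := by
  by_contra hc
  have hc' : ∀ e : G.edgeSet, u ∈ (e : Sym2 V) →
      ¬(u ∈ (e : Sym2 V) ∧ ∀ v ∈ (e : Sym2 V), p v ≠ j) → a e = 0 := by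
    intro e hA hB
    by_contra hne
    exact hc ⟨e, hA, hB, by omega⟩
  refine absurd ?_ (not_le.mpr h)
  unfold wtAtAvoiding wt
  refine Finset.sum_le_sum fun e _ => ?_
  by_cases h1 : u ∈ (e : Sym2 V)
  · by_cases h2 : u ∈ (e : Sym2 V) ∧ ∀ v ∈ (e : Sym2 V), p v ≠ j
    · rw [if_pos h1, if_pos h2]
    · rw [if_pos h1, if_neg h2, hc' e h1 h2]
  · rw [if_neg h1]
    exact Nat.zero_le _

lemma exists_total_witness (a : G.edgeSet →₀ ℕ)
    (h : wtAtAvoiding G p j u a < totalWtAvoiding G p j a) :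
    ∃ e : G.edgeSet, (∀ v ∈ (e : Sym2 V), p v ≠ j)
      ∧ ¬(u ∈ (e : Sym2 V) ∧ ∀ v ∈ (e : Sym2 V), p v ≠ j) ∧ 1 ≤ a e := by
  by_contra hc
  have hc' : ∀ e : G.edgeSet, (∀ v ∈ (e : Sym2 V), p v ≠ j) →
      ¬(u ∈ (e : Sym2 V) ∧ ∀ v ∈ (e : Sym2 V), p v ≠ j) → a e = 0 := by
    intro e hA hB
    by_contra hne
    exact hc ⟨e, hA, hB, by omega⟩
  refine absurd ?_ (not_le.mpr h)
  unfold wtAtAvoiding totalWtAvoiding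
  refine Finset.sum_le_sum fun e _ => ?_
  by_cases h1 : ∀ v ∈ (e : Sym2 V), p v ≠ j
  · by_cases h2 : u ∈ (e : Sym2 V) ∧ ∀ v ∈ (e : Sym2 V), p v ≠ j
    · rw [if_pos h1, if_pos h2]
    · rw [if_pos h1, if_neg h2, hc' e h1 h2]
  · rw [if_neg h1]
    exact Nat.zero_le _

lemma swap_step [Fintype V]
    (hAdj : ∀ x y, G.Adj x y ↔ p x ≠ p y) (huj : p u ≠ j) (a : G.edgeSet →₀ ℕ)
    (h1 : wtAtAvoiding G p j u a < wt G a u)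
    (h2 : wtAtAvoiding G p j u a < totalWtAvoiding G p j a) :
    ∃ a' : G.edgeSet →₀ ℕ, (∀ v, wt G a' v = wt G a v) ∧
      totalWtAvoiding G p j a' = totalWtAvoiding G p j a ∧
      wtAtAvoiding G p j u a' = wtAtAvoiding G p j u a + 1 := by
  obtain ⟨e₁, he₁u, he₁n, he₁pos⟩ := exists_wt_witness G p j u a h1
  obtain ⟨e₂, he₂av, he₂n, he₂pos⟩ := exists_total_witness G p j u a h2
  have hue₂ : u ∉ (e₂ : Sym2 V) := fun hu => he₂n ⟨hu, he₂av⟩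
  -- e₁ = s(u, z) with p z = j
  obtain ⟨z, he₁, hpz⟩ : ∃ z, s(u, z) = (e₁ : Sym2 V) ∧ p z = j := by
    refine ⟨Sym2.Mem.other he₁u, Sym2.other_spec he₁u, ?_⟩
    by_contra hpz
    apply he₁n
    refine ⟨he₁u, ?_⟩
    intro v hv
    rw [← Sym2.other_spec he₁u, Sym2.mem_iff] at hv
    rcases hv with rfl | rfl
    · exact huj
    · exact hpz
  have hzu : z ≠ u := fun h => huj (h ▸ hpz)
  -- e₂ = s(w, w') with p w ≠ p u
  obtain ⟨w, w', hew, hwj, hw'j, hwu, hw'u, hwpu, hww'⟩ :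
      ∃ w w', (e₂ : Sym2 V) = s(w, w') ∧ p w ≠ j ∧ p w' ≠ j ∧ w ≠ u ∧ w' ≠ u
        ∧ p w ≠ p u ∧ w ≠ w' := by
    obtain ⟨w, w', hew, hne⟩ := edge_two G e₂
    have hadj : G.Adj w w' := G.mem_edgeSet.mp (hew ▸ e₂.prop)
    have hpww' : p w ≠ p w' := (hAdj w w').mp hadj
    have hwj : p w ≠ j := he₂av w (by rw [hew]; exact Sym2.mem_mk_left _ _)
    have hw'j : p w' ≠ j := he₂av w' (by rw [hew]; exact Sym2.mem_mk_right _ _)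
    have hwu : w ≠ u := fun h => hue₂ (by rw [hew, ← h]; exact Sym2.mem_mk_left _ _)
    have hw'u : w' ≠ u := fun h => hue₂ (by rw [hew, ← h]; exact Sym2.mem_mk_right _ _)
    rcases eq_or_ne (p w) (p u) with hpw | hpw
    · exact ⟨w', w, by rw [hew, Sym2.eq_swap], hw'j, hwj, hw'u, hwu,
        by rw [← hpw]; exact Ne.symm hpww', Ne.symm hne⟩
    · exact ⟨w, w', hew, hwj, hw'j, hwu, hw'u, hpw, hne⟩
  have hzw : z ≠ w := fun h => hwj (h ▸ hpz)
  have hzw' : z ≠ w' := fun h => hw'j (h ▸ hpz)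
  have hadj1 : G.Adj u w := (hAdj u w).mpr (Ne.symm hwpu)
  have hadj2 : G.Adj z w' := (hAdj z w').mpr (by rw [hpz]; exact Ne.symm hw'j)
  have he₁e₂ : e₁ ≠ e₂ := by
    intro h
    apply hue₂
    rw [← h, ← he₁]
    exact Sym2.mem_mk_left _ _
  obtain ⟨c, hca⟩ : ∃ c : G.edgeSet →₀ ℕ,
      c + Finsupp.single e₁ 1 + Finsupp.single e₂ 1 = a := by
    refine ⟨a - Finsupp.single e₁ 1 - Finsupp.single e₂ 1, ?_⟩
    ext f
    simp only [Finsupp.add_apply, Finsupp.tsub_apply, Finsupp.single_apply]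
    rcases eq_or_ne e₁ f with rfl | h1f
    · rw [if_pos rfl, if_neg (Ne.symm he₁e₂)]
      omega
    · rcases eq_or_ne e₂ f with rfl | h2f
      · rw [if_neg h1f, if_pos rfl]
        omega
      · rw [if_neg h1f, if_neg h2f]
        omega
  refine ⟨c + Finsupp.single (⟨s(u, w), G.mem_edgeSet.mpr hadj1⟩ : G.edgeSet) 1
      + Finsupp.single (⟨s(z, w'), G.mem_edgeSet.mpr hadj2⟩ : G.edgeSet) 1, ?_, ?_, ?_⟩
  · intro v
    conv_rhs => rw [← hca]
    rw [wt_fadd, wt_fadd, wt_fadd, wt_fadd, wt_fsingle, wt_fsingle, wt_fsingle, wt_fsingle]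
    have hm1 : ((⟨s(u, w), G.mem_edgeSet.mpr hadj1⟩ : G.edgeSet) : Sym2 V) = s(u, w) := rfl
    have hm2 : ((⟨s(z, w'), G.mem_edgeSet.mpr hadj2⟩ : G.edgeSet) : Sym2 V) = s(z, w') := rfl
    rw [hm1, hm2, ← he₁, hew]
    simp only [Sym2.mem_iff]
    rcases eq_or_ne v u with rfl | hvu <;> rcases eq_or_ne v z with rfl | hvz <;>
      rcases eq_or_ne v w with rfl | hvw <;> rcases eq_or_ne v w' with rfl | hvw' <;>
      simp_all
  · conv_rhs => rw [← hca]
    rw [total_fadd, total_fadd, total_fadd, total_fadd,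
      total_fsingle, total_fsingle, total_fsingle, total_fsingle]
    have hm1 : ((⟨s(u, w), G.mem_edgeSet.mpr hadj1⟩ : G.edgeSet) : Sym2 V) = s(u, w) := rfl
    have hm2 : ((⟨s(z, w'), G.mem_edgeSet.mpr hadj2⟩ : G.edgeSet) : Sym2 V) = s(z, w') := rfl
    rw [hm1, hm2, ← he₁, hew]
    have c1 : (∀ v ∈ s(u, w), p v ≠ j) := by
      intro v hv
      rw [Sym2.mem_iff] at hv
      rcases hv with rfl | rfl <;> assumption
    have c2 : ¬(∀ v ∈ s(z, w'), p v ≠ j) := fun h => h z (Sym2.mem_mk_left _ _) hpz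
    have c3 : ¬(∀ v ∈ s(u, z), p v ≠ j) := fun h => h z (Sym2.mem_mk_right _ _) hpz
    have c4 : (∀ v ∈ s(w, w'), p v ≠ j) := by
      intro v hv
      rw [Sym2.mem_iff] at hv
      rcases hv with rfl | rfl <;> assumption
    rw [if_pos c1, if_neg c2, if_neg c3, if_pos c4]
  · conv_rhs => rw [← hca]
    rw [at_fadd, at_fadd, at_fadd, at_fadd,
      at_fsingle, at_fsingle, at_fsingle, at_fsingle]
    have hm1 : ((⟨s(u, w), G.mem_edgeSet.mpr hadj1⟩ : G.edgeSet) : Sym2 V) = s(u, w) := rfl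
    have hm2 : ((⟨s(z, w'), G.mem_edgeSet.mpr hadj2⟩ : G.edgeSet) : Sym2 V) = s(z, w') := rfl
    rw [hm1, hm2, ← he₁, hew]
    have c1 : (u ∈ s(u, w) ∧ ∀ v ∈ s(u, w), p v ≠ j) := by
      refine ⟨Sym2.mem_mk_left _ _, ?_⟩
      intro v hv
      rw [Sym2.mem_iff] at hv
      rcases hv with rfl | rfl <;> assumption
    have c2 : ¬(u ∈ s(z, w') ∧ ∀ v ∈ s(z, w'), p v ≠ j) := by
      rintro ⟨h, -⟩
      rw [Sym2.mem_iff] at h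
      rcases h with h | h
      · exact hzu h.symm
      · exact hw'u h.symm
    have c3 : ¬(u ∈ s(u, z) ∧ ∀ v ∈ s(u, z), p v ≠ j) := by
      rintro ⟨-, h⟩
      exact h z (Sym2.mem_mk_right _ _) hpz
    have c4 : ¬(u ∈ s(w, w') ∧ ∀ v ∈ s(w, w'), p v ≠ j) := by
      rintro ⟨h, -⟩
      rw [Sym2.mem_iff] at h
      rcases h with h | h
      · exact hwu h.symm
      · exact hw'u h.symm
    rw [if_pos c1, if_neg c2, if_neg c3, if_neg c4]

lemma main_comb [Fintype V]
    (hAdj : ∀ x y, G.Adj x y ↔ p x ≠ p y) (huj : p u ≠ j) :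
    ∀ (k : ℕ) (a : G.edgeSet →₀ ℕ),
      min (wt G a u) (totalWtAvoiding G p j a) - wtAtAvoiding G p j u a ≤ k →
      ∃ b : G.edgeSet →₀ ℕ, (∀ v, wt G b v = wt G a v) ∧
        wtAtAvoiding G p j u b = min (wt G a u) (totalWtAvoiding G p j a) := by
  intro k
  induction k with
  | zero =>
    intro a h
    refine ⟨a, fun _ => rfl, ?_⟩
    have h1 := at_le_wt G p j u a
    have h2 := at_le_total G p j u a
    omega
  | succ k ih =>
    intro a h
    by_cases heq : wtAtAvoiding G p j u a = min (wt G a u) (totalWtAvoiding G p j a)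
    · exact ⟨a, fun _ => rfl, heq⟩
    · have h1 := at_le_wt G p j u a
      have h2 := at_le_total G p j u a
      obtain ⟨a', ha'w, ha't, ha'a⟩ := swap_step G p j u hAdj huj a (by omega) (by omega)
      obtain ⟨b, hbw, hbat⟩ := ih a' (by rw [ha'a, ha't, ha'w u]; omega)
      exact ⟨b, fun v => (hbw v).trans (ha'w v), by rw [hbat, ha't, ha'w u]⟩

end main

/-- (Swapping endpoints of edges.)  Let `t^a` be a monomial, `i ≠ j`
parts, `u ∈ P_i`, let `Δ` be the total weight of edges of `H_{t^a}` avoiding `P_j` and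
`δ(c)` the total weight of edges of `H_{t^c}` joining `u` to a vertex outside `P_j`.
If `H_{t^a}` has an edge `{w₁, w₂}` with `w₁, w₂ ∉ P_j` and `w₁, w₂ ≠ u`, then there is
`t^b` with `t^a - t^b ∈ I(X)`, all weighted degrees unchanged, and
`δ(b) = min (wt_{t^a}(u)) Δ`. -/
theorem statement7 {V ι K : Type*} [Fintype V] [DecidableEq V] [Fintype ι] [DecidableEq ι]
    [Field K] [Fintype K]
    (p : V → ι) (hp : Function.Surjective p) (hr : 2 ≤ Fintype.card ι)
    (G : SimpleGraph V) [Fintype G.edgeSet] (hAdj : ∀ x y, G.Adj x y ↔ p x ≠ p y)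
    (a : G.edgeSet →₀ ℕ) (i j : ι) (hij : i ≠ j) (u : V) (hu : p u = i)
    (w₁ w₂ : V) (hw : G.Adj w₁ w₂) (hw₁ : p w₁ ≠ j) (hw₂ : p w₂ ≠ j)
    (hw₁u : w₁ ≠ u) (hw₂u : w₂ ≠ u)
    (hpos : 1 ≤ a ⟨s(w₁, w₂), G.mem_edgeSet.mpr hw⟩) :
    ∃ b : G.edgeSet →₀ ℕ,
      ((monomial a 1 : MvPolynomial G.edgeSet K) - monomial b 1) ∈ vanishingIdeal K G ∧
      (∀ v, wt G b v = wt G a v) ∧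
      wtAtAvoiding G p j u b = min (wt G a u) (totalWtAvoiding G p j a) := by
  have huj : p u ≠ j := by rw [hu]; exact hij
  obtain ⟨b, hbw, hbat⟩ := main_comb G p j u hAdj huj
      (min (wt G a u) (totalWtAvoiding G p j a) - wtAtAvoiding G p j u a) a le_rfl
  exact ⟨b, mem_vanishing G a b hbw, hbw, hbat⟩
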